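/- Let n be a positive integer, Δt, Δx > 0, and let L¹, L² ∈ ℝ^{n×n} be the circulant matrices with entries (indices modulo n) L¹_{j,j±1} = 1/2 and L²_{j,j±1} = ±Δt/(2Δx), all other entries zero. Let A ∈ ℝ^{m×m} be symmetric and set c = λ_max(A)·Δt/Δx. Then for every u ∈ ℝ^{n×m}: ‖L¹ u − L² u Aᵀ‖_F ≤ (max over α ∈ {1,…,n} of √(cos²(2πα/n) + c² sin²(2πα/n))) · ‖u‖_F. -/

import Mathlib

open Matrix
open scoped Real

/- Periodic (circulant) Lax-Friedrichs matrices: L¹ has entries 1/2 on the super- and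
sub-diagonal (indices modulo n), L² has entries ±Δt/(2Δx) there; all other entries zero. -/

noncomputable def L1 (n : ℕ) [NeZero n] : Matrix (Fin n) (Fin n) ℝ :=
  Matrix.of fun j k => (if k = j + 1 then (1 / 2 : ℝ) else 0) + (if k = j - 1 then (1 / 2 : ℝ) else 0)

noncomputable def L2 (n : ℕ) [NeZero n] (Δt Δx : ℝ) : Matrix (Fin n) (Fin n) ℝ :=
  Matrix.of fun j k =>
    (if k = j + 1 then Δt / (2 * Δx) else 0) + (if k = j - 1 then -(Δt / (2 * Δx)) else 0)

/- Frobenius norm of a real matrix. -/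
noncomputable def frob {n m : ℕ} (M : Matrix (Fin n) (Fin m) ℝ) : ℝ :=
  Real.sqrt (∑ i, ∑ j, (M i j) ^ 2)

/- Spectral norm (largest absolute eigenvalue, for symmetric matrices) of a real matrix:
the operator norm induced by the Euclidean norm. -/
noncomputable def specNorm {m : ℕ} (A : Matrix (Fin m) (Fin m) ℝ) : ℝ :=
  ‖Matrix.toEuclideanCLM (𝕜 := ℝ) A‖


noncomputable def EE (n : ℕ) (α : ℕ) (t : ℤ) : ℂ :=
  Complex.exp (2 * π * Complex.I * α * t / n)

lemma EE_congr {n : ℕ} (hn : n ≠ 0) (α : ℕ) {s t : ℤ} (h : s ≡ t [ZMOD (n:ℤ)]) :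
    EE n α s = EE n α t := by
  obtain ⟨k, hk⟩ : (n:ℤ) ∣ s - t := Int.ModEq.dvd (Int.ModEq.symm h)
  have hs : s = t + n * k := by linarith
  have hn' : (n:ℂ) ≠ 0 := by exact_mod_cast hn
  rw [EE, EE, hs]
  push_cast
  rw [show 2 * π * Complex.I * α * ((t : ℂ) + n * k) / n
      = 2 * π * Complex.I * α * t / n + (α * k : ℤ) * (2 * π * Complex.I) by
    push_cast; field_simp]
  rw [Complex.exp_add, Complex.exp_int_mul_two_pi_mul_I, mul_one]

lemma EE_add {n : ℕ} (hn : n ≠ 0) (α : ℕ) (s t : ℤ) :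
    EE n α (s + t) = EE n α s * EE n α t := by
  have hn' : (n:ℂ) ≠ 0 := by exact_mod_cast hn
  rw [EE, EE, EE, ← Complex.exp_add]
  congr 1
  push_cast
  field_simp

lemma EE_conj {n : ℕ} (α : ℕ) (t : ℤ) : (starRingEnd ℂ) (EE n α t) = EE n α (-t) := by
  rw [EE, EE, ← Complex.exp_conj]
  congr 1
  simp only [map_div₀, _root_.map_mul, Complex.conj_I, Complex.conj_ofReal, map_ofNat,
    map_natCast, map_intCast]
  push_cast
  ring

noncomputable def ft {n : ℕ} (v : Fin n → ℂ) (α : ℕ) : ℂ :=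
  ∑ j : Fin n, EE n α ((j : ℕ) : ℤ) * v j

lemma EE_sum {n : ℕ} (hn : n ≠ 0) (d : ℤ) :
    ∑ α ∈ Finset.range n, EE n α d = if d % (n:ℤ) = 0 then (n : ℂ) else 0 := by
  have hn' : (n:ℂ) ≠ 0 := by exact_mod_cast hn
  have key : ∀ α : ℕ, EE n α d = Complex.exp (2 * π * Complex.I * d / n) ^ α := by
    intro α
    rw [EE, ← Complex.exp_nat_mul]
    congr 1
    field_simp
  simp only [key]
  set ζ := Complex.exp (2 * π * Complex.I * d / n) with hζ
  have hζ1 : ζ = 1 ↔ (d % (n:ℤ) = 0) := by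
    rw [hζ, Complex.exp_eq_one_iff]
    constructor
    · rintro ⟨k, hk⟩
      have h2 : (2*(π:ℂ)*Complex.I) ≠ 0 := by
        simp [Real.pi_ne_zero, Complex.I_ne_zero, Complex.ofReal_ne_zero]
      have hdc : (d : ℂ) = k * n := by
        field_simp at hk
        exact mul_left_cancel₀ h2 (by rw [hk]; ring :
          (2*(π:ℂ)*Complex.I) * d = (2*(π:ℂ)*Complex.I) * (k * n))
      have : d = k * n := by exact_mod_cast hdc
      simp [this, Int.mul_emod_left]
    · intro h
      obtain ⟨k, hk⟩ := Int.dvd_of_emod_eq_zero h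
      exact ⟨k, by rw [hk]; push_cast; field_simp⟩
  by_cases hd : d % (n:ℤ) = 0
  · simp [hd, hζ1.mpr hd]
  · have hζne : ζ ≠ 1 := fun h => hd (hζ1.mp h)
    rw [geom_sum_eq hζne]
    have hζn : ζ ^ n = 1 := by
      rw [hζ, ← Complex.exp_nat_mul]
      rw [show (n:ℂ) * (2 * π * Complex.I * d / n) = d * (2*π*Complex.I) by field_simp]
      exact Complex.exp_int_mul_two_pi_mul_I d
    simp [hd, hζn]

lemma parseval {n : ℕ} [NeZero n] (v : Fin n → ℂ) :
    ∑ α ∈ Finset.range n, Complex.normSq (ft v α) = n * ∑ j, Complex.normSq (v j) := by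
  have hn : n ≠ 0 := NeZero.ne n
  have hjk : ∀ j k : Fin n, ((((j:ℕ):ℤ) - ((k:ℕ):ℤ)) % (n:ℤ) = 0) ↔ j = k := by
    intro j k
    constructor
    · intro h
      have hd := Int.dvd_of_emod_eq_zero h
      have hdn : n ∣ (((j:ℕ):ℤ) - ((k:ℕ):ℤ)).natAbs := by
        have := Int.natAbs_dvd_natAbs.mpr hd
        simpa using this
      have h1 : (j:ℕ) < n := j.isLt
      have h2 : (k:ℕ) < n := k.isLt
      have habs : (((j:ℕ):ℤ) - ((k:ℕ):ℤ)).natAbs < n := by omega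
      rcases Nat.eq_zero_or_pos (((j:ℕ):ℤ) - ((k:ℕ):ℤ)).natAbs with h0 | hpos
      · have : (j:ℕ) = (k:ℕ) := by omega
        exact Fin.ext this
      · exact absurd (Nat.le_of_dvd hpos hdn) (by omega)
    · rintro rfl
      simp
  have key : ∑ α ∈ Finset.range n, ((Complex.normSq (ft v α) : ℝ) : ℂ)
      = (n:ℂ) * ∑ j, ((Complex.normSq (v j) : ℝ) : ℂ) := by
    calc ∑ α ∈ Finset.range n, ((Complex.normSq (ft v α) : ℝ) : ℂ)
        = ∑ α ∈ Finset.range n, ft v α * (starRingEnd ℂ) (ft v α) := by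
          simp [Complex.mul_conj]
      _ = ∑ α ∈ Finset.range n, ∑ j : Fin n, ∑ k : Fin n,
            (v j * (starRingEnd ℂ) (v k)) * EE n α (((j:ℕ):ℤ) - ((k:ℕ):ℤ)) := by
          refine Finset.sum_congr rfl fun α _ => ?_
          rw [ft, _root_.map_sum, Finset.sum_mul_sum]
          refine Finset.sum_congr rfl fun j _ => Finset.sum_congr rfl fun k _ => ?_
          rw [_root_.map_mul, EE_conj, show (((j:ℕ):ℤ) - ((k:ℕ):ℤ)) = ((j:ℕ):ℤ) + (-((k:ℕ):ℤ)) by ring,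
            EE_add hn]
          ring
      _ = ∑ j : Fin n, ∑ k : Fin n,
            (v j * (starRingEnd ℂ) (v k)) * ∑ α ∈ Finset.range n, EE n α (((j:ℕ):ℤ) - ((k:ℕ):ℤ)) := by
          rw [Finset.sum_comm]
          refine Finset.sum_congr rfl fun j _ => ?_
          rw [Finset.sum_comm]
          refine Finset.sum_congr rfl fun k _ => ?_
          rw [Finset.mul_sum]
      _ = ∑ j : Fin n, (v j * (starRingEnd ℂ) (v j)) * n := by
          refine Finset.sum_congr rfl fun j _ => ?_
          rw [Finset.sum_eq_single j]
          · rw [EE_sum hn, if_pos ((hjk j j).mpr rfl)]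
          · intro k _ hkj
            rw [EE_sum hn, if_neg fun h => hkj ((hjk j k).mp h).symm, mul_zero]
          · intro h
            exact absurd (Finset.mem_univ j) h
      _ = (n:ℂ) * ∑ j, ((Complex.normSq (v j) : ℝ) : ℂ) := by
          rw [Finset.mul_sum]
          refine Finset.sum_congr rfl fun j _ => ?_
          rw [Complex.mul_conj]
          ring
  exact_mod_cast key

lemma val_add_one_modeq {n : ℕ} [NeZero n] (j : Fin n) :
    (((j + 1 : Fin n) : ℕ) : ℤ) ≡ ((j : ℕ) : ℤ) + 1 [ZMOD (n:ℤ)] := by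
  have h : ((j + 1 : Fin n) : ℕ) = ((j : ℕ) + 1 % n) % n := by
    rw [Fin.val_add, Fin.val_one']
  have h1 : ∀ a : ℤ, a % (n:ℤ) ≡ a [ZMOD (n:ℤ)] := fun a => Int.emod_emod_of_dvd a dvd_rfl
  calc (((j + 1 : Fin n) : ℕ) : ℤ) = (((j : ℕ) : ℤ) + (1:ℤ) % (n:ℤ)) % (n:ℤ) := by
        rw [h]; push_cast; rfl
    _ ≡ ((j : ℕ) : ℤ) + (1:ℤ) % (n:ℤ) [ZMOD (n:ℤ)] := h1 _
    _ ≡ ((j : ℕ) : ℤ) + 1 [ZMOD (n:ℤ)] := Int.ModEq.add_left _ (h1 1)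

lemma ft_shift_up {n : ℕ} [NeZero n] (v : Fin n → ℂ) (α : ℕ) :
    ft (fun j => v (j + 1)) α = EE n α (-1) * ft v α := by
  have hn : n ≠ 0 := NeZero.ne n
  have h := Equiv.sum_comp (Equiv.addRight (1 : Fin n))
    (fun k : Fin n => EE n α (((k:ℕ):ℤ) - 1) * v k)
  simp only [Equiv.coe_addRight] at h
  calc ft (fun j => v (j + 1)) α
      = ∑ j : Fin n, EE n α ((((j+1 : Fin n):ℕ):ℤ) - 1) * v (j + 1) := by
        rw [ft]
        refine Finset.sum_congr rfl fun j _ => ?_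
        rw [EE_congr hn α (Int.ModEq.symm ((val_add_one_modeq j).sub_right 1)).symm]
        simp
    _ = ∑ k : Fin n, EE n α (((k:ℕ):ℤ) - 1) * v k := h
    _ = EE n α (-1) * ft v α := by
        rw [ft, Finset.mul_sum]
        refine Finset.sum_congr rfl fun k _ => ?_
        rw [show ((k:ℕ):ℤ) - 1 = (-1) + ((k:ℕ):ℤ) by ring, EE_add hn]
        ring

lemma ft_shift_down {n : ℕ} [NeZero n] (v : Fin n → ℂ) (α : ℕ) :
    ft (fun j => v (j - 1)) α = EE n α 1 * ft v α := by
  have hn : n ≠ 0 := NeZero.ne n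
  have h := Equiv.sum_comp (Equiv.subRight (1 : Fin n))
    (fun k : Fin n => EE n α (((k:ℕ):ℤ) + 1) * v k)
  simp only [Equiv.subRight_apply] at h
  calc ft (fun j => v (j - 1)) α
      = ∑ j : Fin n, EE n α ((((j - 1 : Fin n):ℕ):ℤ) + 1) * v (j - 1) := by
        rw [ft]
        refine Finset.sum_congr rfl fun j _ => ?_
        have h2 : ((((j - 1) + 1 : Fin n):ℕ):ℤ) ≡ (((j - 1 : Fin n):ℕ):ℤ) + 1 [ZMOD (n:ℤ)] :=
          val_add_one_modeq (j - 1)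
        rw [sub_add_cancel] at h2
        rw [EE_congr hn α h2]
    _ = ∑ k : Fin n, EE n α (((k:ℕ):ℤ) + 1) * v k := h
    _ = EE n α 1 * ft v α := by
        rw [ft, Finset.mul_sum]
        refine Finset.sum_congr rfl fun k _ => ?_
        rw [show ((k:ℕ):ℤ) + 1 = 1 + ((k:ℕ):ℤ) by ring, EE_add hn]
        ring

noncomputable def Sn (n : ℕ) [NeZero n] (c : ℝ) : ℝ :=
  (Finset.Icc 1 n).sup' (Finset.nonempty_Icc.mpr (Nat.one_le_iff_ne_zero.mpr (NeZero.ne n)))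
    (fun α : ℕ => Real.sqrt (Real.cos (2 * π * α / n) ^ 2 + c ^ 2 * Real.sin (2 * π * α / n) ^ 2))

lemma n_mem_Icc (n : ℕ) [NeZero n] : n ∈ Finset.Icc 1 n :=
  Finset.mem_Icc.mpr ⟨Nat.one_le_iff_ne_zero.mpr (NeZero.ne n), le_refl n⟩

lemma Sn_ge (n : ℕ) [NeZero n] (c : ℝ) {α : ℕ} (hα : α ∈ Finset.Icc 1 n) :
    Real.sqrt (Real.cos (2 * π * α / n) ^ 2 + c ^ 2 * Real.sin (2 * π * α / n) ^ 2) ≤ Sn n c := by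
  unfold Sn
  exact Finset.le_sup'
    (fun α : ℕ => Real.sqrt (Real.cos (2 * π * α / n) ^ 2 + c ^ 2 * Real.sin (2 * π * α / n) ^ 2)) hα

lemma Sn_nonneg (n : ℕ) [NeZero n] (c : ℝ) : 0 ≤ Sn n c :=
  le_trans (Real.sqrt_nonneg _) (Sn_ge n c (n_mem_Icc n))

lemma mode_bound (n : ℕ) [NeZero n] (c : ℝ) (α : ℕ) (hα : α ∈ Finset.range n) :
    Real.cos (2 * π * α / n) ^ 2 + c ^ 2 * Real.sin (2 * π * α / n) ^ 2 ≤ (Sn n c) ^ 2 := by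
  have hn : (n:ℝ) ≠ 0 := Nat.cast_ne_zero.mpr (NeZero.ne n)
  have haux : ∀ β : ℕ, β ∈ Finset.Icc 1 n →
      Real.cos (2 * π * β / n) ^ 2 + c ^ 2 * Real.sin (2 * π * β / n) ^ 2 ≤ (Sn n c) ^ 2 := by
    intro β hβ
    have h0 : 0 ≤ Real.cos (2 * π * β / n) ^ 2 + c ^ 2 * Real.sin (2 * π * β / n) ^ 2 := by
      positivity
    have h1 := Sn_ge n c hβ
    calc Real.cos (2 * π * β / n) ^ 2 + c ^ 2 * Real.sin (2 * π * β / n) ^ 2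
        = Real.sqrt (Real.cos (2 * π * β / n) ^ 2 + c ^ 2 * Real.sin (2 * π * β / n) ^ 2) ^ 2 :=
          (Real.sq_sqrt h0).symm
      _ ≤ (Sn n c) ^ 2 := pow_le_pow_left₀ (Real.sqrt_nonneg _) h1 2
  rcases Nat.eq_zero_or_pos α with rfl | hpos
  · have hval : Real.cos (2 * π * (0:ℕ) / n) ^ 2 + c ^ 2 * Real.sin (2 * π * (0:ℕ) / n) ^ 2 = 1 := by
      norm_num
    have hn2 : (2 : ℝ) * π * n / n = 2 * π := by field_simp
    have hvn : Real.cos (2 * π * n / n) ^ 2 + c ^ 2 * Real.sin (2 * π * n / n) ^ 2 = 1 := by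
      rw [hn2, Real.cos_two_pi, Real.sin_two_pi]
      norm_num
    rw [hval, ← hvn]
    exact haux n (n_mem_Icc n)
  · exact haux α (Finset.mem_Icc.mpr ⟨hpos, le_of_lt (Finset.mem_range.mp hα)⟩)

lemma core {n : ℕ} [NeZero n] (a b c : ℝ) (hab : a + b = 1) (hba : (b - a) ^ 2 ≤ c ^ 2)
    (v : Fin n → ℝ) :
    ∑ j : Fin n, (a * v (j + 1) + b * v (j - 1)) ^ 2 ≤ (Sn n c) ^ 2 * ∑ j : Fin n, v j ^ 2 := by
  have hn : n ≠ 0 := NeZero.ne n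
  set V : Fin n → ℂ := fun j => (v j : ℂ) with hV
  set C : Fin n → ℂ := fun j => (a : ℂ) * V (j + 1) + (b : ℂ) * V (j - 1) with hC
  have hftC : ∀ α : ℕ, ft C α = ((a:ℂ) * EE n α (-1) + (b:ℂ) * EE n α 1) * ft V α := by
    intro α
    calc ft C α = ∑ j : Fin n, EE n α ((j:ℕ):ℤ) * ((a:ℂ) * V (j+1) + (b:ℂ) * V (j-1)) := rfl
      _ = (a:ℂ) * ∑ j : Fin n, EE n α ((j:ℕ):ℤ) * V (j+1)
          + (b:ℂ) * ∑ j : Fin n, EE n α ((j:ℕ):ℤ) * V (j-1) := by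
          rw [Finset.mul_sum, Finset.mul_sum, ← Finset.sum_add_distrib]
          exact Finset.sum_congr rfl fun j _ => by ring
      _ = (a:ℂ) * (EE n α (-1) * ft V α) + (b:ℂ) * (EE n α 1 * ft V α) := by
          rw [← ft_shift_up V α, ← ft_shift_down V α]; rfl
      _ = ((a:ℂ) * EE n α (-1) + (b:ℂ) * EE n α 1) * ft V α := by ring
  have habC : ((a:ℝ):ℂ) + ((b:ℝ):ℂ) = 1 := by exact_mod_cast congrArg (fun x : ℝ => (x:ℂ)) hab
  have hmag : ∀ α : ℕ, Complex.normSq ((a:ℂ) * EE n α (-1) + (b:ℂ) * EE n α 1)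
      = Real.cos (2*π*α/n) ^ 2 + (b-a) ^ 2 * Real.sin (2*π*α/n) ^ 2 := by
    intro α
    have h1 : EE n α 1 = Complex.exp (((2*π*α/n : ℝ) : ℂ) * Complex.I) := by
      rw [EE]; congr 1; push_cast; ring
    have h1' : EE n α 1 = ((Real.cos (2*π*α/n) : ℝ) : ℂ) + ((Real.sin (2*π*α/n) : ℝ) : ℂ) * Complex.I := by
      rw [h1, Complex.exp_mul_I, Complex.ofReal_cos, Complex.ofReal_sin]
    have hm1 : EE n α (-1) = (starRingEnd ℂ) (EE n α 1) := by rw [EE_conj]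
    have hexpr : (a:ℂ) * EE n α (-1) + (b:ℂ) * EE n α 1
        = ((Real.cos (2*π*α/n) : ℝ) : ℂ) + (((b - a) * Real.sin (2*π*α/n) : ℝ) : ℂ) * Complex.I := by
      rw [hm1, h1', _root_.map_add, _root_.map_mul, Complex.conj_ofReal, Complex.conj_ofReal, Complex.conj_I,
        Complex.ofReal_mul, Complex.ofReal_sub]
      linear_combination ((Real.cos (2*π*α/n) : ℝ) : ℂ) * habC
    rw [hexpr, Complex.normSq_add_mul_I]
    ring
  have hC2 : ∀ j : Fin n, Complex.normSq (C j) = (a * v (j+1) + b * v (j-1)) ^ 2 := by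
    intro j
    have : C j = ((a * v (j+1) + b * v (j-1) : ℝ) : ℂ) := by rw [hC]; push_cast; rfl
    rw [this, Complex.normSq_ofReal]; ring
  have hV2 : ∀ j : Fin n, Complex.normSq (V j) = v j ^ 2 := by
    intro j; rw [hV, Complex.normSq_ofReal]; ring
  have hP1 := parseval C
  have hP2 := parseval V
  have hsum : ∑ α ∈ Finset.range n, Complex.normSq (ft C α)
      ≤ (Sn n c) ^ 2 * ∑ α ∈ Finset.range n, Complex.normSq (ft V α) := by
    rw [Finset.mul_sum]
    refine Finset.sum_le_sum fun α hα => ?_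
    rw [hftC α, _root_.map_mul, hmag α]
    have hb : Real.cos (2*π*α/n) ^ 2 + (b-a) ^ 2 * Real.sin (2*π*α/n) ^ 2
        ≤ Real.cos (2*π*α/n) ^ 2 + c ^ 2 * Real.sin (2*π*α/n) ^ 2 := by
      have := mul_le_mul_of_nonneg_right hba (sq_nonneg (Real.sin (2*π*α/n)))
      linarith
    exact mul_le_mul_of_nonneg_right (le_trans hb (mode_bound n c α hα)) (Complex.normSq_nonneg _)
  have hnpos : (0:ℝ) < (n:ℝ) := by exact_mod_cast Nat.pos_of_ne_zero hn
  have hfinal : (n:ℝ) * ∑ j : Fin n, (a * v (j + 1) + b * v (j - 1)) ^ 2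
      ≤ (n:ℝ) * ((Sn n c) ^ 2 * ∑ j : Fin n, v j ^ 2) := by
    calc (n:ℝ) * ∑ j : Fin n, (a * v (j + 1) + b * v (j - 1)) ^ 2
        = (n:ℝ) * ∑ j : Fin n, Complex.normSq (C j) := by
          congr 1; exact Finset.sum_congr rfl fun j _ => (hC2 j).symm
      _ = ∑ α ∈ Finset.range n, Complex.normSq (ft C α) := hP1.symm
      _ ≤ (Sn n c) ^ 2 * ∑ α ∈ Finset.range n, Complex.normSq (ft V α) := hsum
      _ = (Sn n c) ^ 2 * ((n:ℝ) * ∑ j : Fin n, Complex.normSq (V j)) := by rw [hP2]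
      _ = (n:ℝ) * ((Sn n c) ^ 2 * ∑ j : Fin n, v j ^ 2) := by
          rw [show ∑ j : Fin n, Complex.normSq (V j) = ∑ j : Fin n, v j ^ 2 from
            Finset.sum_congr rfl fun j _ => hV2 j]
          ring
  exact le_of_mul_le_mul_left hfinal hnpos

lemma eig_bound {m : ℕ} (A : Matrix (Fin m) (Fin m) ℝ) (hA' : A.IsHermitian) (i : Fin m) :
    |hA'.eigenvalues i| ≤ specNorm A := by
  set x : EuclideanSpace ℝ (Fin m) := hA'.eigenvectorBasis i with hx
  have hnx : ‖x‖ = 1 := hA'.eigenvectorBasis.orthonormal.1 i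
  have hmv : A *ᵥ ⇑(hA'.eigenvectorBasis i) = hA'.eigenvalues i • ⇑(hA'.eigenvectorBasis i) :=
    hA'.mulVec_eigenvectorBasis i
  have hCLM : Matrix.toEuclideanCLM (𝕜 := ℝ) A x = hA'.eigenvalues i • x := by
    apply (WithLp.equiv 2 (Fin m → ℝ)).injective
    change A *ᵥ x.ofLp = (hA'.eigenvalues i • x).ofLp
    simp only [WithLp.ofLp_smul]
    convert hmv using 2
  have h1 : ‖Matrix.toEuclideanCLM (𝕜 := ℝ) A x‖ ≤ specNorm A * ‖x‖ :=
    (Matrix.toEuclideanCLM (𝕜 := ℝ) A).le_opNorm x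
  rw [hCLM, norm_smul, Real.norm_eq_abs, hnx, mul_one, mul_one] at h1
  exact h1

/- Sharp per-mode amplification bound max_α |D¹_αα − D²_αα λ_max(A)| from the discrete
Fourier analysis of the full Lax-Friedrichs scheme. -/
theorem stmt4 (n m : ℕ) [NeZero n] (Δt Δx : ℝ) (hΔt : 0 < Δt) (hΔx : 0 < Δx)
    (A : Matrix (Fin m) (Fin m) ℝ) (hA : A.IsSymm)
    (c : ℝ) (hc : c = specNorm A * Δt / Δx)
    (u : Matrix (Fin n) (Fin m) ℝ) :
    frob (L1 n * u - L2 n Δt Δx * u * Aᵀ)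
      ≤ ((Finset.Icc 1 n).sup'
            (Finset.nonempty_Icc.mpr (Nat.one_le_iff_ne_zero.mpr (NeZero.ne n)))
            (fun α : ℕ =>
              Real.sqrt (Real.cos (2 * π * α / n) ^ 2 + c ^ 2 * Real.sin (2 * π * α / n) ^ 2)))
        * frob u := by
  have hA' : A.IsHermitian := by
    rw [Matrix.IsHermitian, show Aᴴ = Aᵀ from rfl]
    exact hA
  set Q : Matrix (Fin m) (Fin m) ℝ := (hA'.eigenvectorUnitary : Matrix (Fin m) (Fin m) ℝ)
    with hQdef
  set d : Fin m → ℝ := hA'.eigenvalues with hddef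
  have hAQ : A * Q = Q * Matrix.diagonal d := by
    have key : A * Q = ((hA'.eigenvectorUnitary : Matrix (Fin m) (Fin m) ℝ)
          * Matrix.diagonal (RCLike.ofReal ∘ hA'.eigenvalues)
          * star (hA'.eigenvectorUnitary : Matrix (Fin m) (Fin m) ℝ)) * Q := by
      exact congrArg (· * Q) hA'.spectral_theorem
    rw [key, Matrix.mul_assoc, Matrix.mul_assoc,
      show (star (hA'.eigenvectorUnitary : Matrix (Fin m) (Fin m) ℝ))
          * (hA'.eigenvectorUnitary : Matrix (Fin m) (Fin m) ℝ) = 1 from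
        Unitary.coe_star_mul_self hA'.eigenvectorUnitary,
      Matrix.mul_one]
    rfl
  have hQQ : Q * Qᵀ = 1 := by
    have h := Unitary.coe_mul_star_self hA'.eigenvectorUnitary
    simpa [Matrix.star_eq_conjTranspose] using h
  have hpres : ∀ X : Matrix (Fin n) (Fin m) ℝ,
      ∑ i, ∑ k, ((X * Q) i k) ^ 2 = ∑ i, ∑ k, (X i k) ^ 2 := by
    intro X
    have e : ∀ (Y : Matrix (Fin n) (Fin m) ℝ) (i : Fin n),
        ∑ k, (Y i k) ^ 2 = (Y * Yᵀ) i i := by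
      intro Y i
      simp [Matrix.mul_apply, sq]
    have h1 : (X * Q) * (X * Q)ᵀ = X * Xᵀ := by
      rw [Matrix.transpose_mul, Matrix.mul_assoc, ← Matrix.mul_assoc Q, hQQ, Matrix.one_mul]
    simp_rw [e]
    rw [h1]
  set M : Matrix (Fin n) (Fin m) ℝ := L1 n * u - L2 n Δt Δx * u * Aᵀ with hM
  set w : Matrix (Fin n) (Fin m) ℝ := u * Q with hw
  have hMQ : M * Q = L1 n * w - L2 n Δt Δx * w * Matrix.diagonal d := by
    rw [hM, hA]
    simp only [Matrix.sub_mul, Matrix.mul_assoc, hAQ, hw]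
  have hcol : ∀ k : Fin m,
      ∑ i, ((M * Q) i k) ^ 2 ≤ (Sn n c) ^ 2 * ∑ i, (w i k) ^ 2 := by
    intro k
    have hentry : ∀ i : Fin n, (M * Q) i k
        = (1/2 - d k * (Δt/(2*Δx))) * w (i+1) k + (1/2 + d k * (Δt/(2*Δx))) * w (i-1) k := by
      intro i
      rw [hMQ]
      simp only [Matrix.sub_apply, Matrix.mul_diagonal]
      simp [L1, L2, Matrix.mul_apply, add_mul, ite_mul, Finset.sum_add_distrib,
        Finset.sum_ite_eq']
      ring
    have hba : ((1/2 + d k * (Δt/(2*Δx))) - (1/2 - d k * (Δt/(2*Δx)))) ^ 2 ≤ c ^ 2 := by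
      have hL := eig_bound A hA' k
      have h0 : 0 ≤ specNorm A := norm_nonneg _
      have h1 : (d k) ^ 2 ≤ (specNorm A) ^ 2 := by nlinarith [sq_abs (d k), abs_nonneg (d k)]
      have hxne : Δx ≠ 0 := ne_of_gt hΔx
      rw [hc]
      have hsimp : ((1/2 + d k * (Δt/(2*Δx))) - (1/2 - d k * (Δt/(2*Δx)))) ^ 2
          = (d k) ^ 2 * (Δt / Δx) ^ 2 := by
        field_simp
        ring
      have hsimp2 : (specNorm A * Δt / Δx) ^ 2 = (specNorm A) ^ 2 * (Δt / Δx) ^ 2 := by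
        field_simp
      rw [hsimp, hsimp2]
      exact mul_le_mul_of_nonneg_right h1 (sq_nonneg _)
    have := core (1/2 - d k * (Δt/(2*Δx))) (1/2 + d k * (Δt/(2*Δx))) c (by ring) hba
      (fun i => w i k)
    simp_rw [hentry]
    exact this
  have key : ∑ i, ∑ k, (M i k) ^ 2 ≤ (Sn n c) ^ 2 * ∑ i, ∑ k, (u i k) ^ 2 := by
    calc ∑ i, ∑ k, (M i k) ^ 2 = ∑ i, ∑ k, ((M * Q) i k) ^ 2 := (hpres M).symm
      _ = ∑ k, ∑ i, ((M * Q) i k) ^ 2 := Finset.sum_comm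
      _ ≤ ∑ k, (Sn n c) ^ 2 * ∑ i, (w i k) ^ 2 := Finset.sum_le_sum fun k _ => hcol k
      _ = (Sn n c) ^ 2 * ∑ k, ∑ i, (w i k) ^ 2 := by rw [Finset.mul_sum]
      _ = (Sn n c) ^ 2 * ∑ i, ∑ k, (w i k) ^ 2 := by rw [Finset.sum_comm]
      _ = (Sn n c) ^ 2 * ∑ i, ∑ k, (u i k) ^ 2 := by rw [hw, hpres u]
  show frob M ≤ Sn n c * frob u
  rw [frob, frob]
  calc Real.sqrt (∑ i, ∑ k, (M i k) ^ 2)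
      ≤ Real.sqrt ((Sn n c) ^ 2 * ∑ i, ∑ k, (u i k) ^ 2) := Real.sqrt_le_sqrt key
    _ = Sn n c * Real.sqrt (∑ i, ∑ k, (u i k) ^ 2) := by
        rw [Real.sqrt_mul (sq_nonneg _), Real.sqrt_sq (Sn_nonneg n c)]
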